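/- Let S be a semigroup of partial isometries on a complex Hilbert space H, let m ≥ 1 be an integer, and let R_1, R_2, ..., R_m, S be elements of S. Then S (Q_{R_1} Q_{R_2} ··· Q_{R_m}) S* = Q_{S R_1} Q_{S R_2} ··· Q_{S R_m}, where Q_T := T T* for any operator T. -/

import Mathlib

section Aux

variable {H : Type*} [NormedAddCommGroup H] [InnerProductSpace ℂ H] [CompleteSpace H]

/-- Two self-adjoint idempotents `P`, `E` with `P*E` idempotent commute. -/
private lemma proj_comm (P E : H →L[ℂ] H) (hP2 : P * P = P) (hE2 : E * E = E)
    (hPs : star P = P) (hEs : star E = E) (h1 : P * E * (P * E) = P * E) :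
    P * E = E * P := by
  have hD : (P * E - P * E * P) * star (P * E - P * E * P) = 0 := by
    have hstar : star (P * E - P * E * P) = E * P - P * E * P := by
      simp [star_sub, star_mul, hPs, hEs, mul_assoc]
    rw [hstar, mul_sub, sub_mul, sub_mul]
    have e1 : P * E * (E * P) = P * E * P := by
      calc P * E * (E * P) = P * (E * E) * P := by simp only [mul_assoc]
        _ = P * E * P := by rw [hE2]
    have e2 : P * E * (P * E * P) = P * E * P := by
      calc P * E * (P * E * P) = P * E * (P * E) * P := by simp only [mul_assoc]
        _ = P * E * P := by rw [h1]
    have e3 : P * E * P * (E * P) = P * E * P := by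
      calc P * E * P * (E * P) = P * E * (P * E) * P := by simp only [mul_assoc]
        _ = P * E * P := by rw [h1]
    have e4 : P * E * P * (P * E * P) = P * E * P := by
      calc P * E * P * (P * E * P) = P * E * (P * P) * (E * P) := by
            simp only [mul_assoc]
        _ = P * E * P * (E * P) := by rw [hP2]
        _ = P * E * P := e3
    rw [e1, e2, e3, e4]
    abel
  have hD0 : P * E - P * E * P = 0 := by
    rwa [CStarRing.mul_star_self_eq_zero_iff] at hD
  have hPE : P * E = P * E * P := by rwa [sub_eq_zero] at hD0
  have hsa : star (P * E) = P * E := by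
    rw [hPE]; simp [star_mul, hPs, hEs, mul_assoc]
  calc P * E = star (P * E) := hsa.symm
    _ = E * P := by rw [star_mul, hPs, hEs]

/-- In a semigroup of partial isometries, `star S * S` commutes with `R * star R`. -/
private lemma comm_key (S R : H →L[ℂ] H)
    (hS : S * star S * S = S) (hR : R * star R * R = R)
    (hSR : S * R * star (S * R) * (S * R) = S * R) :
    (star S * S) * (R * star R) = (R * star R) * (star S * S) := by
  have hP2 : (star S * S) * (star S * S) = star S * S := by
    calc star S * S * (star S * S) = star (S * star S * S) * S := by
          simp only [star_mul, star_star, mul_assoc]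
      _ = star S * S := by rw [hS]
  have hE2 : (R * star R) * (R * star R) = R * star R := by
    calc R * star R * (R * star R) = (R * star R * R) * star R := by
          simp only [mul_assoc]
      _ = R * star R := by rw [hR]
  have hPs : star (star S * S) = star S * S := by simp [star_mul]
  have hEs : star (R * star R) = R * star R := by simp [star_mul]
  have h1 : (star S * S) * (R * star R) * ((star S * S) * (R * star R))
      = (star S * S) * (R * star R) := by
    have h := congrArg (fun X => star S * X * star R) hSR
    simp only [star_mul] at h
    calc star S * S * (R * star R) * (star S * S * (R * star R))
        = star S * (S * R * (star R * star S) * (S * R)) * star R := by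
          simp only [mul_assoc]
      _ = star S * (S * R) * star R := h
      _ = star S * S * (R * star R) := by simp only [mul_assoc]
  exact proj_comm _ _ hP2 hE2 hPs hEs h1

end Aux

/-- Lemma 2.1: if `𝒮` is a semigroup of partial isometries, `R_1, …, R_m, S ∈ 𝒮`
(`m ≥ 1`), then `S (Q_{R_1} ⋯ Q_{R_m}) S* = Q_{S R_1} ⋯ Q_{S R_m}`,
where `Q_T = T T*`. -/
theorem conj_prod_final_projections {H : Type*} [NormedAddCommGroup H]
    [InnerProductSpace ℂ H] [CompleteSpace H] (𝒮 : Set (H →L[ℂ] H))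
    (hmul : ∀ A ∈ 𝒮, ∀ B ∈ 𝒮, A * B ∈ 𝒮)
    (hpi : ∀ A ∈ 𝒮, A * star A * A = A)
    (m : ℕ) (hm : 1 ≤ m) (R : Fin m → H →L[ℂ] H) (hR : ∀ i, R i ∈ 𝒮)
    (S : H →L[ℂ] H) (hS : S ∈ 𝒮) :
    S * (List.ofFn fun i => R i * star (R i)).prod * star S =
      (List.ofFn fun i => (S * R i) * star (S * R i)).prod := by
  have key : ∀ A ∈ 𝒮, (star S * S) * (A * star A) = (A * star A) * (star S * S) :=
    fun A hA => comm_key S A (hpi S hS) (hpi A hA) (hpi _ (hmul S hS A hA))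
  have hSstar : star S * S * star S = star S := by
    calc star S * S * star S = star (S * star S * S) := by
          simp only [star_mul, star_star, mul_assoc]
      _ = star S := by rw [hpi S hS]
  have main : ∀ (L : List (H →L[ℂ] H)), (∀ A ∈ L, A ∈ 𝒮) → ∀ A ∈ 𝒮,
      S * ((A :: L).map fun B => B * star B).prod * star S =
        ((A :: L).map fun B => (S * B) * star (S * B)).prod := by
    intro L
    induction L with
    | nil =>
      intro _ A hA
      simp [star_mul, mul_assoc]
    | cons B L ih =>
      intro hL A hA
      have hBL : ∀ C ∈ L, C ∈ 𝒮 := fun C hC => hL C (List.mem_cons_of_mem _ hC)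
      have hB : B ∈ 𝒮 := hL B List.mem_cons_self
      have ihB := ih hBL B hB
      have hcomm : Commute (star S * S) (((B :: L).map fun C => C * star C).prod) := by
        apply Commute.list_prod_right
        intro C hC
        simp only [List.mem_map] at hC
        obtain ⟨D, hD, rfl⟩ := hC
        exact key D (hL D hD)
      have hswap : ((B :: L).map fun C => C * star C).prod * (star S * S * star S)
          = (star S * S) * (((B :: L).map fun C => C * star C).prod * star S) := by
        rw [← mul_assoc, ← hcomm.eq, mul_assoc]
      calc S * ((A :: B :: L).map fun C => C * star C).prod * star S
          = S * (A * star A) * (((B :: L).map fun C => C * star C).prod * star S) := by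
            simp only [List.map_cons, List.prod_cons, mul_assoc]
        _ = S * (A * star A) * (((B :: L).map fun C => C * star C).prod *
              (star S * S * star S)) := by rw [hSstar]
        _ = S * (A * star A) * ((star S * S) *
              (((B :: L).map fun C => C * star C).prod * star S)) := by rw [hswap]
        _ = (S * A * star (S * A)) *
              (S * ((B :: L).map fun C => C * star C).prod * star S) := by
            simp only [star_mul, mul_assoc]
        _ = ((A :: B :: L).map fun C => (S * C) * star (S * C)).prod := by
            rw [ihB]; simp
  obtain ⟨m', rfl⟩ : ∃ m', m = m' + 1 := ⟨m - 1, (Nat.succ_pred_eq_of_pos hm).symm⟩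
  have h1 : (List.ofFn fun i : Fin (m' + 1) => R i * star (R i))
      = (List.ofFn R).map fun B => B * star B := by
    simp only [List.map_ofFn]; rfl
  have h2 : (List.ofFn fun i : Fin (m' + 1) => (S * R i) * star (S * R i))
      = (List.ofFn R).map fun B => (S * B) * star (S * B) := by
    simp only [List.map_ofFn]; rfl
  rw [h1, h2, List.ofFn_succ]
  exact main _ (by intro A hA; simp only [List.mem_ofFn] at hA; obtain ⟨i, rfl⟩ := hA; exact hR _)
    (R 0) (hR 0)
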